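/- Let G be a graph, q ≥ 2, and let G' be obtained from G by attaching, for each vertex v of G, exactly q − g(v) new pendant vertices adjacent to v, where g : V(G) → {1,2}. Let n = |V(G)|, r = |{v : g(v)=1}|, and t ≥ 0. Then G has an edge g-colouring using at least t distinct colours if and only if G' has an edge q-colouring using at least t + r + (q−2)n distinct colours. -/

import Mathlib

open Finset

variable {V : Type*}

/-- The set of colours appearing on edges incident to vertex `v`. -/
def vColors (G : SimpleGraph V) (f : V → V → ℕ) (v : V) : Set ℕ :=
  {c | ∃ u, G.Adj v u ∧ f v u = c}

/-- The set of colours used on edges of `G`. -/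
def colorsOf (G : SimpleGraph V) (f : V → V → ℕ) : Set ℕ :=
  {c | ∃ u v, G.Adj u v ∧ f u v = c}

/-- An edge `q`-colouring: a symmetric assignment of colours to edges such that
every vertex is incident with at most `q` distinct colours. -/
def IsEdgeQColoring (G : SimpleGraph V) (q : ℕ) (f : V → V → ℕ) : Prop :=
  (∀ u v, f u v = f v u) ∧ ∀ v, (vColors G f v).ncard ≤ q

/-- `S`-composability: every vertex of `S` sees at most `q - 1` non-zero colours. -/
def IsComposable (G : SimpleGraph V) (q : ℕ) (S : Set V) (f : V → V → ℕ) : Prop :=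
  ∀ v ∈ S, ((vColors G f v) \ {0}).ncard ≤ q - 1

/-- `χ'_q(G, S)`: maximum number of non-zero colours of an `S`-composable edge
`q`-colouring of `G`. -/
noncomputable def chiq (G : SimpleGraph V) (q : ℕ) (S : Set V) : ℕ :=
  sSup {k | ∃ f, IsEdgeQColoring G q f ∧ IsComposable G q S f ∧
    ((colorsOf G f) \ {0}).ncard = k}

/-- `χ'_q(G)`: maximum number of distinct colours of an edge `q`-colouring of `G`. -/
noncomputable def chimax (G : SimpleGraph V) (q : ℕ) : ℕ :=
  sSup {k | ∃ f, IsEdgeQColoring G q f ∧ (colorsOf G f).ncard = k}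

/-- `M` is a matching in `G`: a set of edges, pairwise not sharing a vertex. -/
def IsMatchingSet (G : SimpleGraph V) (M : Set (Sym2 V)) : Prop :=
  M ⊆ G.edgeSet ∧ ∀ e ∈ M, ∀ e' ∈ M, e ≠ e' → ∀ v, v ∈ e → v ∉ e'

/-- `M` is a maximal matching in `G`. -/
def IsMaximalMatchingSet (G : SimpleGraph V) (M : Set (Sym2 V)) : Prop :=
  IsMatchingSet G M ∧ ∀ e ∈ G.edgeSet, ∃ e' ∈ M, ∃ v, v ∈ e ∧ v ∈ e'

/-- `X` is a vertex cover of `G`. -/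
def IsVertexCover (G : SimpleGraph V) (X : Set V) : Prop :=
  ∀ e ∈ G.edgeSet, ∃ v ∈ X, v ∈ e

/-- A layering of `G`. -/
def IsLayering (G : SimpleGraph V) (lam : V → ℤ) : Prop :=
  ∀ u v, G.Adj u v → |lam u - lam v| ≤ 1

/-- The graph part `G_m` of the `(λ, r, m)`-stratification: delete all edges `uv`
with `λ(u) ≡ m` and `λ(v) ≡ m + 1 (mod r)`. -/
def stratGraph (G : SimpleGraph V) (lam : V → ℤ) (r m : ℤ) : SimpleGraph V where
  Adj u v := G.Adj u v ∧
    ¬ ((lam u ≡ m [ZMOD r] ∧ lam v ≡ m + 1 [ZMOD r]) ∨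
       (lam v ≡ m [ZMOD r] ∧ lam u ≡ m + 1 [ZMOD r]))
  symm := by
    constructor
    intro u v h
    exact ⟨h.1.symm, fun hc => h.2 hc.symm⟩
  loopless := ⟨fun v h => G.loopless.irrefl v h.1⟩

/-- The set `S_m` of the `(λ, r, m)`-stratification: vertices incident with deleted
edges. -/
def stratSet (G : SimpleGraph V) (lam : V → ℤ) (r m : ℤ) : Set V :=
  {v | ∃ u, G.Adj v u ∧ ¬ (stratGraph G lam r m).Adj v u}

/-- An edge `g`-colouring for a per-vertex bound `g`. -/
def IsEdgeGColoring (G : SimpleGraph V) (g : V → ℕ) (f : V → V → ℕ) : Prop :=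
  (∀ u v, f u v = f v u) ∧ ∀ v, (vColors G f v).ncard ≤ g v

/-- The graph obtained from `G` by attaching `p v` pendant vertices to each
vertex `v`; the pendant vertices of `v` are `Sum.inr (v, i)` for `i < p v`. -/
def pendantGraph (G : SimpleGraph V) (p : V → ℕ) : SimpleGraph (V ⊕ V × ℕ) where
  Adj x y :=
    match x, y with
    | Sum.inl u, Sum.inl v => G.Adj u v
    | Sum.inl u, Sum.inr (w, i) => w = u ∧ i < p w
    | Sum.inr (w, i), Sum.inl u => w = u ∧ i < p w
    | Sum.inr _, Sum.inr _ => False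
  symm := by
    constructor
    rintro (u | ⟨w, i⟩) (v | ⟨w', j⟩) h
    · exact h.symm
    · exact h
    · exact h
    · exact h
  loopless := by
    constructor
    rintro (u | ⟨w, i⟩) h
    · exact G.loopless.irrefl u h
    · exact h.elim

/-! ### Auxiliary material for the proof of `stmt14`. -/

section StmtAux

lemma mem_vColors' {W : Type*} {G : SimpleGraph W} {f : W → W → ℕ} {v : W} {c : ℕ} :
    c ∈ vColors G f v ↔ ∃ u, G.Adj v u ∧ f v u = c := Iff.rfl

lemma mem_colorsOf' {W : Type*} {G : SimpleGraph W} {f : W → W → ℕ} {c : ℕ} :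
    c ∈ colorsOf G f ↔ ∃ u v, G.Adj u v ∧ f u v = c := Iff.rfl

lemma vColors_subset_of_le {W : Type*} {G H : SimpleGraph W}
    (h : ∀ u v, G.Adj u v → H.Adj u v) (f : W → W → ℕ) (v : W) :
    vColors G f v ⊆ vColors H f v := by
  rintro c ⟨u, hu, rfl⟩; exact ⟨u, h _ _ hu, rfl⟩

lemma colorsOf_subset_of_le {W : Type*} {G H : SimpleGraph W}
    (h : ∀ u v, G.Adj u v → H.Adj u v) (f : W → W → ℕ) :
    colorsOf G f ⊆ colorsOf H f := by
  rintro c ⟨u, v, hu, rfl⟩; exact ⟨u, v, h _ _ hu, rfl⟩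

lemma colorsOf_finite {W : Type*} [Finite W] (G : SimpleGraph W) (f : W → W → ℕ) :
    (colorsOf G f).Finite := by
  apply Set.Finite.subset (Set.finite_range fun x : W × W => f x.1 x.2)
  rintro c ⟨u, v, _, rfl⟩; exact ⟨(u, v), rfl⟩

lemma vColors_finite {W : Type*} [Finite W] (G : SimpleGraph W) (f : W → W → ℕ) (v : W) :
    (vColors G f v).Finite := by
  apply Set.Finite.subset (Set.finite_range (f v))
  rintro c ⟨u, _, rfl⟩; exact ⟨u, rfl⟩

lemma vColors_comp {W : Type*} (G : SimpleGraph W) (φ : ℕ → ℕ) (f : W → W → ℕ) (v : W) :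
    vColors G (fun x y => φ (f x y)) v = φ '' vColors G f v := by
  ext c; constructor
  · rintro ⟨u, hu, rfl⟩; exact ⟨f v u, ⟨u, hu, rfl⟩, rfl⟩
  · rintro ⟨d, ⟨u, hu, rfl⟩, rfl⟩; exact ⟨u, hu, rfl⟩

lemma colorsOf_comp {W : Type*} (G : SimpleGraph W) (φ : ℕ → ℕ) (f : W → W → ℕ) :
    colorsOf G (fun x y => φ (f x y)) = φ '' colorsOf G f := by
  ext c; constructor
  · rintro ⟨u, w, hu, rfl⟩; exact ⟨f u w, ⟨u, w, hu, rfl⟩, rfl⟩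
  · rintro ⟨d, ⟨u, w, hu, rfl⟩, rfl⟩; exact ⟨u, w, hu, rfl⟩

lemma merge_diff_subset (c1 c2 : ℕ) (s : Set ℕ) :
    s \ {c1} ⊆ (fun c => if c = c1 then c2 else c) '' s := by
  rintro c ⟨hc, hne⟩
  simp only [Set.mem_singleton_iff] at hne
  exact ⟨c, hc, if_neg hne⟩

lemma ncard_le_merge_add_one {s : Set ℕ} (hs : s.Finite) (c1 c2 : ℕ) :
    s.ncard ≤ ((fun c => if c = c1 then c2 else c) '' s).ncard + 1 := by
  have h1 : s ⊆ (s \ {c1}) ∪ {c1} := by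
    intro c hc; by_cases h : c = c1 <;> simp [h, hc]
  calc s.ncard ≤ ((s \ {c1}) ∪ {c1}).ncard :=
        Set.ncard_le_ncard h1 ((hs.diff).union (Set.finite_singleton _))
    _ ≤ (s \ {c1}).ncard + 1 := by
        simpa using Set.ncard_union_le (s \ {c1}) {c1}
    _ ≤ _ := by
        have := Set.ncard_le_ncard (merge_diff_subset c1 c2 s) (hs.image _)
        omega

lemma merge_subset_diff {s : Set ℕ} {c1 c2 : ℕ} (h2 : c2 ∈ s) (hne : c2 ≠ c1) :
    (fun c => if c = c1 then c2 else c) '' s ⊆ s \ {c1} := by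
  rintro _ ⟨c, hc, rfl⟩
  by_cases h : c = c1
  · simp only [h, if_pos rfl]
    exact ⟨h2, hne⟩
  · simp only [if_neg h]
    exact ⟨hc, h⟩

/-- The pendant graph parameterised by an explicit finite set of pendants. -/
def pg (G : SimpleGraph V) (S : Finset (V × ℕ)) [DecidableEq (V × ℕ)] :
    SimpleGraph (V ⊕ V × ℕ) where
  Adj x y :=
    match x, y with
    | Sum.inl u, Sum.inl v => G.Adj u v
    | Sum.inl u, Sum.inr w => w.1 = u ∧ w ∈ S
    | Sum.inr w, Sum.inl u => w.1 = u ∧ w ∈ S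
    | Sum.inr _, Sum.inr _ => False
  symm := by
    constructor
    rintro (u | w) (v | w') h
    · exact h.symm
    · exact h
    · exact h
    · exact h
  loopless := by
    constructor
    rintro (u | w) h
    · exact G.loopless.irrefl u h
    · exact h

variable [DecidableEq V]

lemma pg_mono {G : SimpleGraph V} {S S' : Finset (V × ℕ)} (hS : S' ⊆ S) :
    ∀ u v, (pg G S').Adj u v → (pg G S).Adj u v := by
  rintro (u | w) (v | w') h
  · exact h
  · exact ⟨h.1, hS h.2⟩
  · exact ⟨h.1, hS h.2⟩
  · exact h.elim

lemma pg_adj_cases {G : SimpleGraph V} {S : Finset (V × ℕ)} (x : V × ℕ)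
    {u v : V ⊕ V × ℕ} (h : (pg G S).Adj u v) :
    (pg G (S.erase x)).Adj u v ∨
      (u = Sum.inl x.1 ∧ v = Sum.inr x) ∨ (u = Sum.inr x ∧ v = Sum.inl x.1) := by
  rcases u with u | w <;> rcases v with v | w'
  · exact Or.inl h
  · obtain ⟨h1, hw⟩ := h
    by_cases hx : w' = x
    · subst hx; subst h1; exact Or.inr (Or.inl ⟨rfl, rfl⟩)
    · exact Or.inl ⟨h1, Finset.mem_erase.mpr ⟨hx, hw⟩⟩
  · obtain ⟨h1, hw⟩ := h
    by_cases hx : w = x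
    · subst hx; subst h1; exact Or.inr (Or.inr ⟨rfl, rfl⟩)
    · exact Or.inl ⟨h1, Finset.mem_erase.mpr ⟨hx, hw⟩⟩
  · exact h.elim

lemma pg_vColors_finite [Fintype V] (G : SimpleGraph V) (S : Finset (V × ℕ))
    (f : (V ⊕ V × ℕ) → (V ⊕ V × ℕ) → ℕ) (x : V ⊕ V × ℕ) :
    (vColors (pg G S) f x).Finite := by
  apply Set.Finite.subset
    ((Set.finite_range (fun u : V => f x (Sum.inl u))).union
      ((S.finite_toSet).image (fun w => f x (Sum.inr w))))
  rintro c ⟨u | w, hadj, rfl⟩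
  · exact Or.inl ⟨u, rfl⟩
  · rcases x with y | y
    · exact Or.inr ⟨w, hadj.2, rfl⟩
    · exact hadj.elim

lemma pg_colorsOf_finite [Fintype V] (G : SimpleGraph V) (S : Finset (V × ℕ))
    (f : (V ⊕ V × ℕ) → (V ⊕ V × ℕ) → ℕ) :
    (colorsOf (pg G S) f).Finite := by
  apply Set.Finite.subset
    (((Set.finite_range (fun p : V × V => f (Sum.inl p.1) (Sum.inl p.2))).union
      ((S.finite_toSet).image (fun w => f (Sum.inl w.1) (Sum.inr w)))).union
      ((S.finite_toSet).image (fun w => f (Sum.inr w) (Sum.inl w.1))))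
  rintro c ⟨u | w, v | w', hadj, rfl⟩
  · exact Or.inl (Or.inl ⟨(u, v), rfl⟩)
  · obtain ⟨h1, hw⟩ := hadj
    subst h1
    exact Or.inl (Or.inr ⟨w', hw, rfl⟩)
  · obtain ⟨h1, hw⟩ := hadj
    subst h1
    exact Or.inr ⟨w, hw, rfl⟩
  · exact hadj.elim

/-- Key induction: from an edge colouring of the pendant graph respecting the
per-vertex budgets `g v + (number of pendants at v)`, obtain an edge
`g`-colouring of `G` losing at most one colour per pendant. -/
lemma pendant_main [Fintype V] (G : SimpleGraph V) (g : V → ℕ) (hg1 : ∀ v, 1 ≤ g v) :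
    ∀ (n : ℕ) (S : Finset (V × ℕ)) (f' : (V ⊕ V × ℕ) → (V ⊕ V × ℕ) → ℕ),
      S.card = n →
      (∀ x y, f' x y = f' y x) →
      (∀ v, (vColors (pg G S) f' (Sum.inl v)).ncard
        ≤ g v + (S.filter (fun w => w.1 = v)).card) →
      ∃ f : V → V → ℕ, IsEdgeGColoring G g f ∧
        (colorsOf (pg G S) f').ncard ≤ (colorsOf G f).ncard + n := by
  intro n
  induction n with
  | zero =>
    intro S f' hcard hsym hinv
    rw [Finset.card_eq_zero] at hcard
    subst hcard
    refine ⟨fun u v => f' (Sum.inl u) (Sum.inl v), ⟨fun u v => hsym _ _, ?_⟩, ?_⟩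
    · intro v
      have hv : vColors G (fun u v => f' (Sum.inl u) (Sum.inl v)) v
          = vColors (pg G (∅ : Finset (V × ℕ))) f' (Sum.inl v) := by
        ext c; constructor
        · rintro ⟨u, hu, rfl⟩; exact ⟨Sum.inl u, hu, rfl⟩
        · rintro ⟨u | w, hadj, rfl⟩
          · exact ⟨u, hadj, rfl⟩
          · exact absurd hadj.2 (Finset.notMem_empty w)
      rw [hv]
      simpa using hinv v
    · have hco : colorsOf G (fun u v => f' (Sum.inl u) (Sum.inl v))
          = colorsOf (pg G (∅ : Finset (V × ℕ))) f' := by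
        ext c; constructor
        · rintro ⟨u, v, hu, rfl⟩; exact ⟨Sum.inl u, Sum.inl v, hu, rfl⟩
        · rintro ⟨u | w, v | w', hadj, rfl⟩
          · exact ⟨u, v, hadj, rfl⟩
          · exact absurd hadj.2 (Finset.notMem_empty w')
          · exact absurd hadj.2 (Finset.notMem_empty w)
          · exact hadj.elim
      rw [hco]
      omega
  | succ n ih =>
    intro S f' hcard hsym hinv
    obtain ⟨x, hx⟩ : S.Nonempty := Finset.card_pos.mp (by omega)
    set S' := S.erase x with hS'
    have hS'sub : S' ⊆ S := Finset.erase_subset _ _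
    have hcard' : S'.card = n := by
      rw [hS', Finset.card_erase_of_mem hx, hcard]
      omega
    -- filter bookkeeping
    have hxf : x ∈ S.filter (fun w => w.1 = x.1) := Finset.mem_filter.mpr ⟨hx, rfl⟩
    have hfa : (S.filter (fun w => w.1 = x.1)).card
        = (S'.filter (fun w => w.1 = x.1)).card + 1 := by
      rw [hS', Finset.filter_erase, Finset.card_erase_of_mem hxf]
      have := Finset.card_pos.mpr ⟨x, hxf⟩
      omega
    have hfv : ∀ v, v ≠ x.1 →
        S'.filter (fun w => w.1 = v) = S.filter (fun w => w.1 = v) := by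
      intro v hv
      rw [hS', Finset.filter_erase]
      exact Finset.erase_eq_of_notMem
        (fun hmem => hv ((Finset.mem_filter.mp hmem).2).symm)
    set k' := (S'.filter (fun w => w.1 = x.1)).card with hk'
    have hvsub : ∀ v, vColors (pg G S') f' (Sum.inl v) ⊆ vColors (pg G S) f' (Sum.inl v) :=
      fun v => vColors_subset_of_le (pg_mono hS'sub) f' (Sum.inl v)
    have hvne : ∀ v, v ≠ x.1 →
        vColors (pg G S) f' (Sum.inl v) ⊆ vColors (pg G S') f' (Sum.inl v) := by
      rintro v hv c ⟨u, hadj, rfl⟩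
      rcases pg_adj_cases x hadj with h' | ⟨h1, h2⟩ | ⟨h1, h2⟩
      · exact ⟨u, h', rfl⟩
      · exact absurd (Sum.inl.inj h1) hv
      · exact absurd h1 (by simp)
    set c0 := f' (Sum.inl x.1) (Sum.inr x) with hc0
    have hcsub : colorsOf (pg G S) f' ⊆ colorsOf (pg G S') f' ∪ {c0} := by
      rintro c ⟨u, v, hadj, rfl⟩
      rcases pg_adj_cases x hadj with h' | ⟨h1, h2⟩ | ⟨h1, h2⟩
      · exact Or.inl ⟨u, v, h', rfl⟩
      · subst h1; subst h2; exact Or.inr rfl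
      · subst h1; subst h2; exact Or.inr (hsym _ _)
    by_cases hcase : (vColors (pg G S') f' (Sum.inl x.1)).ncard ≤ g x.1 + k'
    · -- no merge needed
      have hinv' : ∀ v, (vColors (pg G S') f' (Sum.inl v)).ncard
          ≤ g v + (S'.filter (fun w => w.1 = v)).card := by
        intro v
        by_cases hv : v = x.1
        · subst hv; exact hcase
        · calc (vColors (pg G S') f' (Sum.inl v)).ncard
              ≤ (vColors (pg G S) f' (Sum.inl v)).ncard :=
                Set.ncard_le_ncard (hvsub v) (pg_vColors_finite _ _ _ _)
            _ ≤ g v + (S.filter (fun w => w.1 = v)).card := hinv v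
            _ = g v + (S'.filter (fun w => w.1 = v)).card := by rw [hfv v hv]
      obtain ⟨f, hf, hle2⟩ := ih S' f' hcard' hsym hinv'
      refine ⟨f, hf, ?_⟩
      calc (colorsOf (pg G S) f').ncard
          ≤ (colorsOf (pg G S') f' ∪ {c0}).ncard :=
            Set.ncard_le_ncard hcsub ((pg_colorsOf_finite _ _ _).union (Set.finite_singleton _))
        _ ≤ (colorsOf (pg G S') f').ncard + 1 := by
            simpa using Set.ncard_union_le (colorsOf (pg G S') f') {c0}
        _ ≤ (colorsOf G f).ncard + (n + 1) := by omega
    · -- merge two colours at x.1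
      have hup : (vColors (pg G S) f' (Sum.inl x.1)).ncard ≤ g x.1 + k' + 1 := by
        have := hinv x.1
        omega
      have hA : (vColors (pg G S') f' (Sum.inl x.1)).ncard = g x.1 + k' + 1 := by
        have h1 : (vColors (pg G S') f' (Sum.inl x.1)).ncard
            ≤ (vColors (pg G S) f' (Sum.inl x.1)).ncard :=
          Set.ncard_le_ncard (hvsub x.1) (pg_vColors_finite _ _ _ _)
        omega
      have hAeq : vColors (pg G S') f' (Sum.inl x.1) = vColors (pg G S) f' (Sum.inl x.1) :=
        Set.eq_of_subset_of_ncard_le (hvsub x.1) (by omega) (pg_vColors_finite _ _ _ _)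
      obtain ⟨c1, hc1, c2, hc2, hne⟩ :=
        (Set.one_lt_ncard (pg_vColors_finite G S' f' (Sum.inl x.1))).mp
          (by have := hg1 x.1; omega)
      set φ : ℕ → ℕ := fun c => if c = c1 then c2 else c with hφ
      set f'' : (V ⊕ V × ℕ) → (V ⊕ V × ℕ) → ℕ := fun x y => φ (f' x y) with hf''
      have hinv' : ∀ v, (vColors (pg G S') f'' (Sum.inl v)).ncard
          ≤ g v + (S'.filter (fun w => w.1 = v)).card := by
        intro v
        have hvc : vColors (pg G S') f'' (Sum.inl v)
            = φ '' vColors (pg G S') f' (Sum.inl v) := vColors_comp _ _ _ _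
        by_cases hv : v = x.1
        · subst hv
          rw [hvc]
          have hsub : φ '' vColors (pg G S') f' (Sum.inl x.1)
              ⊆ vColors (pg G S') f' (Sum.inl x.1) \ {c1} :=
            merge_subset_diff hc2 (Ne.symm hne)
          calc (φ '' vColors (pg G S') f' (Sum.inl x.1)).ncard
              ≤ (vColors (pg G S') f' (Sum.inl x.1) \ {c1}).ncard :=
                Set.ncard_le_ncard hsub ((pg_vColors_finite _ _ _ _).diff)
            _ = (vColors (pg G S') f' (Sum.inl x.1)).ncard - 1 :=
                Set.ncard_diff_singleton_of_mem hc1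
            _ ≤ g x.1 + k' := by omega
        · rw [hvc]
          calc (φ '' vColors (pg G S') f' (Sum.inl v)).ncard
              ≤ (vColors (pg G S') f' (Sum.inl v)).ncard :=
                Set.ncard_image_le (pg_vColors_finite _ _ _ _)
            _ ≤ (vColors (pg G S) f' (Sum.inl v)).ncard :=
                Set.ncard_le_ncard (hvsub v) (pg_vColors_finite _ _ _ _)
            _ ≤ g v + (S.filter (fun w => w.1 = v)).card := hinv v
            _ = g v + (S'.filter (fun w => w.1 = v)).card := by rw [hfv v hv]
      obtain ⟨f, hf, hle2⟩ := ih S' f'' hcard' (fun a b => by simp [hf'', hsym a b]) hinv'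
      refine ⟨f, hf, ?_⟩
      -- c0 is still present in the smaller graph
      have hc0mem : c0 ∈ vColors (pg G S) f' (Sum.inl x.1) :=
        ⟨Sum.inr x, ⟨rfl, hx⟩, rfl⟩
      have hc0mem' : c0 ∈ colorsOf (pg G S') f' := by
        rw [← hAeq] at hc0mem
        obtain ⟨u, hadj, he⟩ := hc0mem
        exact ⟨Sum.inl x.1, u, hadj, he⟩
      have hsub2 : colorsOf (pg G S) f' ⊆ colorsOf (pg G S') f' := by
        intro c hc
        rcases hcsub hc with h | h
        · exact h
        · rwa [Set.mem_singleton_iff.mp h]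
      have hstep1 : (colorsOf (pg G S) f').ncard ≤ (colorsOf (pg G S') f').ncard :=
        Set.ncard_le_ncard hsub2 (pg_colorsOf_finite _ _ _)
      have hstep2 : (colorsOf (pg G S') f').ncard ≤ (colorsOf (pg G S') f'').ncard + 1 := by
        have hco : colorsOf (pg G S') f'' = φ '' colorsOf (pg G S') f' := colorsOf_comp _ _ _
        rw [hco]
        exact ncard_le_merge_add_one (pg_colorsOf_finite _ _ _) c1 c2
      omega

end StmtAux

/-- `G` has an edge `g`-colouring with at least `t` colours iff the
graph `G'`, obtained by attaching `q − g(v)` pendant vertices to each `v`, has an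
edge `q`-colouring with at least `t + r + (q−2)n` colours, where `n = |V(G)|` and
`r = |{v : g(v) = 1}|`. -/
theorem stmt14 [Fintype V] [DecidableEq V] (G : SimpleGraph V) (q : ℕ) (hq : 2 ≤ q)
    (g : V → ℕ) (hg : ∀ v, g v = 1 ∨ g v = 2) (t : ℕ) :
    (∃ f : V → V → ℕ, IsEdgeGColoring G g f ∧ t ≤ (colorsOf G f).ncard) ↔
    (∃ f' : (V ⊕ V × ℕ) → (V ⊕ V × ℕ) → ℕ,
      IsEdgeQColoring (pendantGraph G (fun v => q - g v)) q f' ∧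
      t + (Finset.univ.filter (fun v => g v = 1)).card + (q - 2) * Fintype.card V ≤
        (colorsOf (pendantGraph G (fun v => q - g v)) f').ncard) := by
  classical
  set p : V → ℕ := fun v => q - g v with hp
  set S₀ : Finset (V × ℕ) :=
    Finset.univ.biUnion (fun v => (Finset.range (p v)).image (fun i => (v, i))) with hS₀
  have hmem : ∀ w : V × ℕ, w ∈ S₀ ↔ w.2 < p w.1 := by
    intro w
    simp only [hS₀, Finset.mem_biUnion, Finset.mem_univ, true_and, Finset.mem_image,
      Finset.mem_range]
    constructor
    · rintro ⟨v, i, hi, rfl⟩; exact hi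
    · intro h; exact ⟨w.1, w.2, h, rfl⟩
  have hpend : pendantGraph G p = pg G S₀ := by
    refine SimpleGraph.ext ?_
    funext x y
    rcases x with u | ⟨w, i⟩ <;> rcases y with v | ⟨w', j⟩
    · rfl
    · show (w' = u ∧ j < p w') = ((w', j).1 = u ∧ (w', j) ∈ S₀)
      apply propext
      rw [hmem (w', j)]
    · show (w = v ∧ i < p w) = ((w, i).1 = v ∧ (w, i) ∈ S₀)
      apply propext
      rw [hmem (w, i)]
    · rfl
  have hgle : ∀ v, g v ≤ q := fun v => by rcases hg v with h | h <;> omega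
  have hq2 : ∀ v, g v + p v = q := fun v => by
    have := hgle v
    have hpv : p v = q - g v := rfl
    omega
  have hinj : ∀ v : V, Function.Injective (fun i : ℕ => (v, i)) := by
    intro v i j h
    simpa using h
  have hfilter : ∀ v, S₀.filter (fun w => w.1 = v)
      = (Finset.range (p v)).image (fun i => (v, i)) := by
    intro v; ext w
    simp only [Finset.mem_filter, hmem, Finset.mem_image, Finset.mem_range]
    constructor
    · rintro ⟨h1, rfl⟩
      exact ⟨w.2, h1, rfl⟩
    · rintro ⟨i, hi, rfl⟩
      exact ⟨hi, rfl⟩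
  have hfcard : ∀ v, (S₀.filter (fun w => w.1 = v)).card = p v := by
    intro v
    rw [hfilter v, Finset.card_image_of_injective _ (hinj v), Finset.card_range]
  have hScard : S₀.card = ∑ v, p v := by
    rw [hS₀, Finset.card_biUnion]
    · exact Finset.sum_congr rfl fun v _ =>
        by rw [Finset.card_image_of_injective _ (hinj v), Finset.card_range]
    · intro a _ b _ hab
      rw [Function.onFun, Finset.disjoint_left]
      rintro ⟨x1, x2⟩ hxa hxb
      simp only [Finset.mem_image, Finset.mem_range, Prod.mk.injEq] at hxa hxb
      obtain ⟨i, _, rfl, rfl⟩ := hxa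
      obtain ⟨j, _, rfl, rfl⟩ := hxb
      exact hab rfl
  have hsum : ∑ v, p v
      = (Finset.univ.filter (fun v => g v = 1)).card + (q - 2) * Fintype.card V := by
    have hpv : ∀ v, p v = (if g v = 1 then 1 else 0) + (q - 2) := by
      intro v
      have hpv : p v = q - g v := rfl
      rcases hg v with h | h <;> simp [hpv, h] <;> omega
    rw [Finset.sum_congr rfl fun v _ => hpv v, Finset.sum_add_distrib,
      Finset.sum_const, Finset.card_filter, smul_eq_mul, Finset.card_univ, mul_comm]
  constructor
  · rintro ⟨f, ⟨hfsym, hfbound⟩, ht⟩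
    set N := (Finset.univ.sup (fun x : V × V => f x.1 x.2)) + 1 with hN
    have hNgt : ∀ u v, f u v < N := by
      intro u v
      have : f u v ≤ Finset.univ.sup (fun x : V × V => f x.1 x.2) :=
        Finset.le_sup (f := fun x : V × V => f x.1 x.2) (Finset.mem_univ (u, v))
      omega
    set enc : V × ℕ → ℕ := fun w => (Fintype.equivFin V w.1 : ℕ) + w.2 * Fintype.card V
      with henc
    have hencinj : Set.InjOn (fun w => N + enc w) ↑S₀ := by
      intro w _ w' _ h
      have hcard : 0 < Fintype.card V := Fintype.card_pos_iff.mpr ⟨w.1⟩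
      have h1 : (Fintype.equivFin V w.1 : ℕ) < Fintype.card V := (Fintype.equivFin V w.1).2
      have h2 : (Fintype.equivFin V w'.1 : ℕ) < Fintype.card V := (Fintype.equivFin V w'.1).2
      have he : (Fintype.equivFin V w.1 : ℕ) + w.2 * Fintype.card V
          = (Fintype.equivFin V w'.1 : ℕ) + w'.2 * Fintype.card V := by
        have : N + enc w = N + enc w' := h
        simp only [henc] at this
        omega
      have e1 : ((Fintype.equivFin V w.1 : ℕ) + w.2 * Fintype.card V) / Fintype.card V
          = w.2 := by
        rw [Nat.add_mul_div_right _ _ hcard, Nat.div_eq_of_lt h1, Nat.zero_add]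
      have e2 : ((Fintype.equivFin V w'.1 : ℕ) + w'.2 * Fintype.card V) / Fintype.card V
          = w'.2 := by
        rw [Nat.add_mul_div_right _ _ hcard, Nat.div_eq_of_lt h2, Nat.zero_add]
      have hm : w.2 = w'.2 := by rw [← e1, ← e2, he]
      have hidx : (Fintype.equivFin V w.1 : ℕ) = (Fintype.equivFin V w'.1 : ℕ) := by
        rw [hm] at he
        exact Nat.add_right_cancel he
      have hv : w.1 = w'.1 := (Fintype.equivFin V).injective (Fin.ext hidx)
      exact Prod.ext hv hm
    set f' : (V ⊕ V × ℕ) → (V ⊕ V × ℕ) → ℕ := fun x y =>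
      match x, y with
      | Sum.inl u, Sum.inl v => f u v
      | Sum.inl _, Sum.inr w => N + enc w
      | Sum.inr w, Sum.inl _ => N + enc w
      | Sum.inr _, Sum.inr _ => 0
      with hf'
    rw [hpend]
    refine ⟨f', ⟨?_, ?_⟩, ?_⟩
    · rintro (u | w) (v | w')
      · exact hfsym u v
      · rfl
      · rfl
      · rfl
    · rintro (v | w)
      · have hsub : vColors (pg G S₀) f' (Sum.inl v) ⊆ vColors G f v ∪
            (fun w => N + enc w) '' ↑(S₀.filter (fun w => w.1 = v)) := by
          rintro c ⟨u | w, hadj, rfl⟩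
          · exact Or.inl ⟨u, hadj, rfl⟩
          · exact Or.inr ⟨w, Finset.mem_coe.mpr (Finset.mem_filter.mpr ⟨hadj.2, hadj.1⟩), rfl⟩
        have hfin : (vColors G f v ∪
            (fun w => N + enc w) '' ↑(S₀.filter (fun w => w.1 = v))).Finite :=
          (vColors_finite G f v).union ((S₀.filter (fun w => w.1 = v)).finite_toSet.image _)
        calc (vColors (pg G S₀) f' (Sum.inl v)).ncard
            ≤ (vColors G f v ∪
              (fun w => N + enc w) '' ↑(S₀.filter (fun w => w.1 = v))).ncard :=
              Set.ncard_le_ncard hsub hfin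
          _ ≤ (vColors G f v).ncard
              + ((fun w => N + enc w) '' ↑(S₀.filter (fun w => w.1 = v))).ncard :=
              Set.ncard_union_le _ _
          _ ≤ g v + p v := by
              have h1 := hfbound v
              have h2 : ((fun w => N + enc w) '' ↑(S₀.filter (fun w => w.1 = v))).ncard
                  ≤ p v := by
                calc ((fun w => N + enc w) '' ↑(S₀.filter (fun w => w.1 = v))).ncard
                    ≤ (↑(S₀.filter (fun w => w.1 = v)) : Set (V × ℕ)).ncard :=
                      Set.ncard_image_le (Finset.finite_toSet _)
                  _ = p v := by rw [Set.ncard_coe_finset, hfcard v]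
              omega
          _ = q := hq2 v
      · have hsub : vColors (pg G S₀) f' (Sum.inr w)
            ⊆ {f' (Sum.inr w) (Sum.inl w.1)} := by
          rintro c ⟨u | w', hadj, rfl⟩
          · obtain ⟨h1, _⟩ := hadj
            subst h1
            rfl
          · exact hadj.elim
        have : (vColors (pg G S₀) f' (Sum.inr w)).ncard
            ≤ ({f' (Sum.inr w) (Sum.inl w.1)} : Set ℕ).ncard :=
          Set.ncard_le_ncard hsub (Set.finite_singleton _)
        rw [Set.ncard_singleton] at this
        omega
    · have hceq : colorsOf (pg G S₀) f'
          = colorsOf G f ∪ (fun w => N + enc w) '' ↑S₀ := by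
        ext c; constructor
        · rintro ⟨u | w, v | w', hadj, rfl⟩
          · exact Or.inl ⟨u, v, hadj, rfl⟩
          · exact Or.inr ⟨w', hadj.2, rfl⟩
          · exact Or.inr ⟨w, hadj.2, rfl⟩
          · exact hadj.elim
        · rintro (⟨u, v, hadj, rfl⟩ | ⟨w, hw, rfl⟩)
          · exact ⟨Sum.inl u, Sum.inl v, hadj, rfl⟩
          · exact ⟨Sum.inl w.1, Sum.inr w, ⟨rfl, hw⟩, rfl⟩
      have hdisj : Disjoint (colorsOf G f) ((fun w => N + enc w) '' ↑S₀) := by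
        rw [Set.disjoint_left]
        rintro c ⟨u, v, _, rfl⟩ ⟨w, _, hw⟩
        have hw' : N + enc w = f u v := hw
        have := hNgt u v
        omega
      have himg : ((fun w => N + enc w) '' ↑S₀).ncard = S₀.card := by
        rw [Set.ncard_image_of_injOn hencinj, Set.ncard_coe_finset]
      rw [hceq, Set.ncard_union_eq hdisj (colorsOf_finite G f)
        ((S₀.finite_toSet).image _), himg]
      have hkey : S₀.card = (Finset.univ.filter (fun v => g v = 1)).card
          + (q - 2) * Fintype.card V := by rw [hScard, hsum]
      linarith
  · rintro ⟨f', ⟨hsym, hbound⟩, ht⟩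
    rw [hpend] at hbound ht
    have hg1 : ∀ v, 1 ≤ g v := fun v => by rcases hg v with h | h <;> omega
    have hinv : ∀ v, (vColors (pg G S₀) f' (Sum.inl v)).ncard
        ≤ g v + (S₀.filter (fun w => w.1 = v)).card := by
      intro v
      have h1 := hbound (Sum.inl v)
      rw [hfcard v]
      have h2 := hq2 v
      omega
    obtain ⟨f, hf, hle⟩ := pendant_main G g hg1 S₀.card S₀ f' rfl hsym hinv
    refine ⟨f, hf, ?_⟩
    have hkey : S₀.card = (Finset.univ.filter (fun v => g v = 1)).card
        + (q - 2) * Fintype.card V := by rw [hScard, hsum]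
    linarith
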